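/- (Twisted iterated Leibniz rule) Let σ be an automorphism of an algebra B of operators and ∇_σ(P) = D² P - σ²(P) D² a σ²-twisted derivation of B (assuming σ commutes with ∇_σ in the sense that σ∘∇_σ = ∇_σ∘σ). Then for all P_1,...,P_q in B and m ≥ 0: ∇_σ^m(P_1 P_2 ··· P_q) = Σ_{m_1+...+m_q = m} (m!/(m_1!···m_q!)) ∇_σ^{m_1}(σ^{2(m_2+...+m_q)}(P_1)) ∇_σ^{m_2}(σ^{2(m_3+...+m_q)}(P_2)) ··· ∇_σ^{m_q}(P_q). -/

import Mathlib

open Finset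

lemma multinomial_map_aux {α β : Type*} (e : α ↪ β) (s : Finset α) (f : β → ℕ) :
    Nat.multinomial (s.map e) f = Nat.multinomial s (f ∘ e) := by
  simp [Nat.multinomial, Finset.sum_map, Finset.prod_map, Function.comp]

lemma multinomial_fin_cons (q k : ℕ) (c : Fin q → ℕ) :
    Nat.multinomial Finset.univ (Fin.cons k c : Fin (q + 1) → ℕ) =
      (k + ∑ i, c i).choose k * Nat.multinomial Finset.univ c := by
  rw [Fin.univ_succ, Nat.multinomial_cons, Fin.cons_zero, multinomial_map_aux,
    Finset.sum_map]
  congr 1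

lemma sum_antidiagonalTuple_succ {M : Type*} [AddCommMonoid M] (q n : ℕ)
    (f : (Fin (q + 1) → ℕ) → M) :
    ∑ c ∈ Finset.Nat.antidiagonalTuple (q + 1) n, f c =
      ∑ k ∈ Finset.range (n + 1), ∑ c ∈ Finset.Nat.antidiagonalTuple q (n - k),
        f (Fin.cons k c) := by
  rw [← Finset.Nat.sum_antidiagonal_eq_sum_range_succ
    (fun k l => ∑ c ∈ Finset.Nat.antidiagonalTuple q l, f (Fin.cons k c)) n]
  rw [Finset.sum_sigma']
  refine Finset.sum_nbij'
    (fun c => (⟨(c 0, ∑ i, Fin.tail c i), Fin.tail c⟩ :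
      (_ : ℕ × ℕ) × (Fin q → ℕ)))
    (fun x => Fin.cons x.1.1 x.2) ?_ ?_ ?_ ?_ ?_
  · intro c hc
    simp only [Finset.Nat.mem_antidiagonalTuple] at hc
    simp only [Finset.mem_sigma, Finset.HasAntidiagonal.mem_antidiagonal,
      Finset.Nat.mem_antidiagonalTuple]
    refine ⟨?_, trivial⟩
    rw [← hc, Fin.sum_univ_succ]
    rfl
  · rintro ⟨⟨a, b⟩, c⟩ hx
    simp only [Finset.mem_sigma, Finset.HasAntidiagonal.mem_antidiagonal,
      Finset.Nat.mem_antidiagonalTuple] at hx ⊢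
    rw [Fin.sum_cons, hx.2, hx.1]
  · intro c _
    exact Fin.cons_self_tail c
  · rintro ⟨⟨a, b⟩, c⟩ hx
    simp only [Finset.mem_sigma, Finset.HasAntidiagonal.mem_antidiagonal,
      Finset.Nat.mem_antidiagonalTuple] at hx
    refine Sigma.ext ?_ ?_
    · simp only [Fin.cons_zero, Fin.tail_cons, hx.2]
    · simp only [Fin.tail_cons]
      exact heq_of_eq rfl
  · intro c _
    exact congrArg f (Fin.cons_self_tail c).symm

lemma pascal_sum_aux {M : Type*} [AddCommMonoid M] (n : ℕ) (t : ℕ → M) :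
    ∑ k ∈ Finset.range (n + 1 + 1), (n + 1).choose k • t k
      = ∑ k ∈ Finset.range (n + 1), n.choose k • t (k + 1)
        + ∑ k ∈ Finset.range (n + 1), n.choose k • t k := by
  rw [Finset.sum_range_succ' (fun k => (n + 1).choose k • t k) (n + 1)]
  simp only [Nat.choose_succ_succ, add_smul, Nat.choose_zero_right, one_smul]
  rw [Finset.sum_add_distrib, add_assoc]
  congr 1
  rw [show (t 0 : M) = n.choose 0 • t 0 by simp,
    ← Finset.sum_range_succ' (fun k => n.choose k • t k) (n + 1),
    Finset.sum_range_succ, Nat.choose_succ_self, zero_smul, add_zero]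

set_option maxHeartbeats 1600000 in
/-- Twisted iterated Leibniz rule: if `σ` is an automorphism of `B` and
`∇_σ` an additive map satisfying the `σ²`-twisted Leibniz rule
`∇_σ(PQ) = σ²(P) ∇_σ(Q) + ∇_σ(P) Q` and commuting with `σ`, then for all `P_1,…,P_q` and
`m ≥ 0`:
`∇_σ^m(P_1 ⋯ P_q) = Σ_{m_1+…+m_q=m} (m!/(m_1!⋯m_q!))
   ∇_σ^{m_1}(σ^{2(m_2+…+m_q)}(P_1)) ⋯ ∇_σ^{m_q}(P_q)`. -/
theorem stmt16 {B : Type*} [Ring B] (σ : B ≃+* B) (nab : B → B)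
    (hadd : ∀ x y : B, nab (x + y) = nab x + nab y)
    (hLeib : ∀ x y : B, nab (x * y) = σ (σ x) * nab y + nab x * y)
    (hcomm : ∀ x : B, nab (σ x) = σ (nab x))
    (q m : ℕ) (P : Fin q → B) :
    nab^[m] ((List.ofFn P).prod) =
      ∑ c ∈ Finset.Nat.antidiagonalTuple q m,
        Nat.multinomial Finset.univ c •
          (List.ofFn fun i : Fin q =>
            nab^[c i] ((σ ^ (2 * ∑ j ∈ Finset.Ioi i, c j)) (P i))).prod := by
  -- basic facts
  have hzero : nab 0 = 0 := by
    have h := hadd 0 0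
    rw [add_zero] at h
    exact left_eq_add.mp h
  have hiter_add : ∀ (n : ℕ) (x y : B), nab^[n] (x + y) = nab^[n] x + nab^[n] y := by
    intro n
    induction n with
    | zero => intro x y; simp
    | succ n ih =>
      intro x y
      rw [Function.iterate_succ_apply', Function.iterate_succ_apply',
        Function.iterate_succ_apply', ih, hadd]
  let N : ℕ → B →+ B := fun n => AddMonoidHom.mk' (nab^[n]) (hiter_add n)
  have hiter_smul : ∀ (n k : ℕ) (x : B), nab^[n] (k • x) = k • nab^[n] x := by
    intro n k x
    exact (N n).map_nsmul k x
  have hnsmul : ∀ (k : ℕ) (z : B), nab (k • z) = k • nab z :=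
    fun k z => hiter_smul 1 k z
  have hsum : ∀ (s : Finset ℕ) (g : ℕ → B),
      nab (∑ k ∈ s, g k) = ∑ k ∈ s, nab (g k) := fun s g => map_sum (N 1) g s
  have hone : nab 1 = 0 := by
    have h := hLeib 1 1
    simp only [mul_one, map_one, one_mul] at h
    exact left_eq_add.mp h
  have hcomm_pow : ∀ (k : ℕ) (x : B), nab ((σ ^ k) x) = (σ ^ k) (nab x) := by
    intro k
    induction k with
    | zero => intro x; rfl
    | succ k ih =>
      intro x
      rw [pow_succ]
      have h : ∀ y : B, ((σ ^ k) * σ) y = (σ ^ k) (σ y) := fun y => rfl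
      rw [h, ih, hcomm, h]
  have hiter_comm_pow : ∀ (n k : ℕ) (x : B), nab^[n] ((σ ^ k) x) = (σ ^ k) (nab^[n] x) := by
    intro n k
    induction n with
    | zero => intro x; simp
    | succ n ih =>
      intro x
      rw [Function.iterate_succ_apply', Function.iterate_succ_apply', ih, hcomm_pow]
  have hsig2 : ∀ (k : ℕ) (x : B), σ (σ ((σ ^ k) x)) = (σ ^ (k + 2)) x := by
    intro k x
    have h1 : ∀ y : B, (σ ^ 2) y = σ (σ y) := by
      intro y
      rw [pow_two]
      rfl
    rw [← h1]
    have h2 : (σ ^ 2) ((σ ^ k) x) = ((σ ^ 2) * (σ ^ k)) x := rfl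
    rw [h2, ← pow_add, add_comm]
  -- the binomial (two-factor) case
  have key : ∀ (n : ℕ) (x y : B), nab^[n] (x * y) =
      ∑ k ∈ Finset.range (n + 1),
        n.choose k • (nab^[k] ((σ ^ (2 * (n - k))) x) * nab^[n - k] y) := by
    intro n
    induction n with
    | zero => intro x y; simp
    | succ n ih =>
      intro x y
      rw [Function.iterate_succ_apply', ih, hsum]
      have step : ∀ k ∈ Finset.range (n + 1),
          nab (n.choose k • (nab^[k] ((σ ^ (2 * (n - k))) x) * nab^[n - k] y)) =
          n.choose k • (nab^[k] ((σ ^ (2 * (n + 1 - k))) x) * nab^[n + 1 - k] y) +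
          n.choose k • (nab^[k + 1] ((σ ^ (2 * (n + 1 - (k + 1)))) x) *
            nab^[n + 1 - (k + 1)] y) := by
        intro k hk
        rw [Finset.mem_range] at hk
        have hkn : k ≤ n := Nat.lt_succ_iff.mp hk
        have e1 : σ (σ (nab^[k] ((σ ^ (2 * (n - k))) x))) =
            nab^[k] ((σ ^ (2 * (n + 1 - k))) x) := by
          rw [hiter_comm_pow, hsig2, show 2 * (n - k) + 2 = 2 * (n + 1 - k) by omega,
            ← hiter_comm_pow]
        have e2 : nab (nab^[n - k] y) = nab^[n + 1 - k] y := by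
          rw [show n + 1 - k = (n - k) + 1 by omega, Function.iterate_succ_apply']
        have e3 : nab (nab^[k] ((σ ^ (2 * (n - k))) x)) =
            nab^[k + 1] ((σ ^ (2 * (n + 1 - (k + 1)))) x) := by
          rw [show n + 1 - (k + 1) = n - k by omega, Function.iterate_succ_apply']
        have e4 : nab^[n - k] y = nab^[n + 1 - (k + 1)] y := by
          rw [show n + 1 - (k + 1) = n - k by omega]
        rw [hnsmul, hLeib, e1, e2, e3, e4, smul_add]
      rw [Finset.sum_congr rfl step, Finset.sum_add_distrib,
        pascal_sum_aux n (fun k => nab^[k] ((σ ^ (2 * (n + 1 - k))) x) * nab^[n + 1 - k] y)]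
      exact add_comm _ _
  -- main induction on q
  induction q generalizing m with
  | zero =>
    have h1 : (List.ofFn P).prod = 1 := by simp
    rw [h1]
    cases m with
    | zero =>
      rw [Finset.Nat.antidiagonalTuple_zero_zero, Finset.sum_singleton]
      simp [Nat.multinomial]
    | succ n =>
      rw [Function.iterate_succ_apply, hone]
      have hz : ∀ j : ℕ, nab^[j] (0 : B) = 0 := by
        intro j
        induction j with
        | zero => rfl
        | succ j ihj => rw [Function.iterate_succ_apply', ihj, hzero]
      rw [hz, Finset.Nat.antidiagonalTuple_zero_succ, Finset.sum_empty]
  | succ q ih =>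
    have h1 : (List.ofFn P).prod = P 0 * (List.ofFn fun i : Fin q => P i.succ).prod := by
      rw [List.ofFn_succ, List.prod_cons]
    rw [h1, key m, sum_antidiagonalTuple_succ]
    apply Finset.sum_congr rfl
    intro k hk
    rw [Finset.mem_range] at hk
    have hkm : k ≤ m := Nat.lt_succ_iff.mp hk
    rw [ih (m - k) (fun i => P i.succ), Finset.mul_sum, Finset.smul_sum]
    apply Finset.sum_congr rfl
    intro c hc
    have hcsum : ∑ i, c i = m - k := Finset.Nat.mem_antidiagonalTuple.mp hc
    rw [mul_smul_comm, smul_smul, multinomial_fin_cons]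
    have hchoose : (k + ∑ i, c i).choose k = m.choose k := by
      rw [hcsum]
      congr 1
      omega
    rw [hchoose]
    congr 1
    rw [List.ofFn_succ, List.prod_cons]
    congr 1
    · simp only [Fin.cons_zero, Fin.sum_Ioi_zero, Fin.cons_succ, hcsum]
    · refine congrArg List.prod (congrArg List.ofFn (funext fun i => ?_))
      simp only [Fin.cons_succ, Fin.sum_Ioi_succ]
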